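/- Let S : C(X,ℂ) → C(Y,ℂ) be a bijective, bounded real-linear map satisfying ‖S(f²)‖ = ‖S(f)²‖ for all f ∈ C(X,ℂ) and ‖S(f)‖ ≤ ‖f‖ for all f. Then ‖S(f)‖ = ‖f‖ for all f ∈ C(X,ℂ), i.e., S is an isometry. -/

import Mathlib

variable {X Y : Type*} [TopologicalSpace X] [CompactSpace X] [T2Space X]
  [TopologicalSpace Y] [CompactSpace Y] [T2Space Y]

theorem norm_sq_cm {Z : Type*} [TopologicalSpace Z] [CompactSpace Z] (f : C(Z, ℂ)) :
    ‖f ^ 2‖ = ‖f‖ ^ 2 := by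
  refine le_antisymm ?_ ?_
  · calc ‖f ^ 2‖ = ‖f * f‖ := by rw [sq]
    _ ≤ ‖f‖ * ‖f‖ := norm_mul_le f f
    _ = ‖f‖ ^ 2 := (sq ‖f‖).symm
  · have h : ‖f‖ ≤ Real.sqrt ‖f ^ 2‖ := by
      refine (ContinuousMap.norm_le f (Real.sqrt_nonneg _)).mpr fun x => ?_
      rw [Real.le_sqrt (norm_nonneg _) (norm_nonneg _)]
      calc ‖f x‖ ^ 2 = ‖(f x) ^ 2‖ := by rw [norm_pow]
        _ = ‖(f ^ 2) x‖ := by simp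
        _ ≤ ‖f ^ 2‖ := (f ^ 2).norm_coe_le_norm x
    calc ‖f‖ ^ 2 ≤ Real.sqrt ‖f ^ 2‖ ^ 2 := by
          exact pow_le_pow_left₀ (norm_nonneg _) h 2
      _ = ‖f ^ 2‖ := Real.sq_sqrt (norm_nonneg _)

theorem stmt12 (S : C(X, ℂ) → C(Y, ℂ)) (hbij : Function.Bijective S)
    (hadd : ∀ f g : C(X, ℂ), S (f + g) = S f + S g)
    (hsmul : ∀ (c : ℝ) (f : C(X, ℂ)), S (c • f) = c • S f)
    (hsq : ∀ f : C(X, ℂ), ‖S (f ^ 2)‖ = ‖(S f) ^ 2‖)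
    (hbd : ∀ f : C(X, ℂ), ‖S f‖ ≤ ‖f‖) :
    ∀ f : C(X, ℂ), ‖S f‖ = ‖f‖ := by
  set L0 : C(X, ℂ) →ₗ[ℝ] C(Y, ℂ) :=
    { toFun := S, map_add' := hadd, map_smul' := hsmul }
  set L : C(X, ℂ) →L[ℝ] C(Y, ℂ) :=
    L0.mkContinuous 1 (fun f => by rw [one_mul]; exact hbd f)
  have hL : ∀ f, L f = S f := fun f => rfl
  have hker : LinearMap.ker (L : C(X, ℂ) →ₗ[ℝ] C(Y, ℂ)) = ⊥ :=
    LinearMap.ker_eq_bot.mpr hbij.1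
  have hrange : LinearMap.range (L : C(X, ℂ) →ₗ[ℝ] C(Y, ℂ)) = ⊤ :=
    LinearMap.range_eq_top.mpr hbij.2
  set e := ContinuousLinearEquiv.ofBijective L hker hrange
  set M : ℝ := ‖(e.symm : C(Y, ℂ) →L[ℝ] C(X, ℂ))‖
  have hM : ∀ f : C(X, ℂ), ‖f‖ ≤ M * ‖S f‖ := by
    intro f
    have h1 : e.symm (S f) = f := by
      have : e f = S f := rfl
      rw [← this, ContinuousLinearEquiv.symm_apply_apply]
    calc ‖f‖ = ‖e.symm (S f)‖ := by rw [h1]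
      _ ≤ M * ‖S f‖ := (e.symm : C(Y, ℂ) →L[ℝ] C(X, ℂ)).le_opNorm (S f)
  have key : ∀ n : ℕ, ∀ f : C(X, ℂ), ‖f‖ ^ (2 ^ n) ≤ M * ‖S f‖ ^ (2 ^ n) := by
    intro n
    induction n with
    | zero => intro f; simpa using hM f
    | succ n ih =>
      intro f
      have h1 : ‖f‖ ^ 2 ^ (n + 1) = ‖f ^ 2‖ ^ 2 ^ n := by
        rw [norm_sq_cm, ← pow_mul, pow_succ, mul_comm]
      have h2 : ‖S (f ^ 2)‖ ^ 2 ^ n ≤ ‖S f‖ ^ 2 ^ (n + 1) := by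
        rw [hsq]
        have : ‖(S f) ^ 2‖ ≤ ‖S f‖ ^ 2 := by
          rw [sq, sq]; exact norm_mul_le _ _
        calc ‖(S f) ^ 2‖ ^ 2 ^ n ≤ (‖S f‖ ^ 2) ^ 2 ^ n :=
              pow_le_pow_left₀ (norm_nonneg _) this _
          _ = ‖S f‖ ^ 2 ^ (n + 1) := by rw [← pow_mul, pow_succ, mul_comm]
      calc ‖f‖ ^ 2 ^ (n + 1) = ‖f ^ 2‖ ^ 2 ^ n := h1
        _ ≤ M * ‖S (f ^ 2)‖ ^ 2 ^ n := ih (f ^ 2)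
        _ ≤ M * ‖S f‖ ^ 2 ^ (n + 1) := by
            have hM0 : 0 ≤ M := norm_nonneg _
            exact mul_le_mul_of_nonneg_left h2 hM0
  intro f
  refine le_antisymm (hbd f) ?_
  by_contra h
  push_neg at h
  rcases eq_or_lt_of_le (norm_nonneg (S f)) with h0 | h0
  · have := key 0 f
    simp [← h0] at this
    rw [this] at h
    simp at h
    exact absurd h (not_lt.mpr (norm_nonneg _))
  · set r : ℝ := ‖f‖ / ‖S f‖
    have hr : 1 < r := (one_lt_div h0).mpr h
    have hbound : ∀ n : ℕ, r ^ (2 ^ n) ≤ M := by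
      intro n
      rw [div_pow, div_le_iff₀ (pow_pos h0 _)]
      exact key n f
    obtain ⟨n, hn⟩ := (pow_unbounded_of_one_lt M hr : ∃ n, M < r ^ n)
    have h2n : r ^ n ≤ r ^ (2 ^ n) :=
      pow_le_pow_right₀ (le_of_lt hr) (Nat.le_of_lt (Nat.lt_two_pow_self (n := n)))
    exact absurd (hbound n) (not_le.mpr (lt_of_lt_of_le hn h2n))
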